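/- The operator 𝒜 is self-adjoint in the Krein space (H_{1/2} × H, [·,·]), where [(x₁,y₁),(x₂,y₂)] = ⟨x₁,x₂⟩_{H_{1/2}} − ⟨y₁,y₂⟩_H; equivalently, ⟨J𝒜x, y⟩ = ⟨Jx, 𝒜y⟩ for all x, y ∈ 𝒟(𝒜) with J = [[I,0],[0,-I]], and J𝒜 is self-adjoint. -/

import Mathlib

open scoped InnerProductSpace ComplexConjugate
open Filter

/-- Abstract setup for the second order equation `z̈ + A₀ z + D ż = 0`:
`Hhalf` plays the role of `H_{1/2} = 𝒟(A₀^{1/2})` with the norm `‖A₀^{1/2}·‖`, `H` is the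
pivot Hilbert space and `Hm` is the dual `H_{-1/2}`; `ι : H_{1/2} → H` and `j : H → H_{-1/2}`
are the (dense, injective, continuous) inclusions; the uniformly positive self-adjoint
operator `A₀` induces an isometric isomorphism `A₀ : H_{1/2} → H_{-1/2}`; the damping
operator `D : H_{1/2} → H_{-1/2}` is bounded, and `A₀^{-1/2} D A₀^{-1/2}` is self-adjoint
nonnegative, expressed via the duality pairing
`⟨u, z⟩_{H_{-1/2}×H_{1/2}} = ⟪A₀⁻¹ u, z⟫_{H_{1/2}}`. -/
structure BeamSetup (Hhalf H Hm : Type*)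
    [NormedAddCommGroup Hhalf] [InnerProductSpace ℂ Hhalf] [CompleteSpace Hhalf]
    [NormedAddCommGroup H] [InnerProductSpace ℂ H] [CompleteSpace H]
    [NormedAddCommGroup Hm] [InnerProductSpace ℂ Hm] [CompleteSpace Hm] : Type _ where
  ι : Hhalf →L[ℂ] H
  ι_inj : Function.Injective ι
  ι_dense : DenseRange ι
  j : H →L[ℂ] Hm
  j_inj : Function.Injective j
  A₀ : Hhalf ≃ₗᵢ[ℂ] Hm
  compat : ∀ (y : H) (z : Hhalf), ⟪A₀.symm (j y), z⟫_ℂ = ⟪y, ι z⟫_ℂ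
  D : Hhalf →L[ℂ] Hm
  D_symm : ∀ z w : Hhalf, ⟪A₀.symm (D z), w⟫_ℂ = ⟪z, A₀.symm (D w)⟫_ℂ
  D_nonneg : ∀ z : Hhalf, 0 ≤ (⟪A₀.symm (D z), z⟫_ℂ).re

namespace BeamSetup

variable {Hhalf H Hm : Type*}
    [NormedAddCommGroup Hhalf] [InnerProductSpace ℂ Hhalf] [CompleteSpace Hhalf]
    [NormedAddCommGroup H] [InnerProductSpace ℂ H] [CompleteSpace H]
    [NormedAddCommGroup Hm] [InnerProductSpace ℂ Hm] [CompleteSpace Hm]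
    (S : BeamSetup Hhalf H Hm)

/-- `A₀⁻¹ : H_{-1/2} → H_{1/2}` as a continuous linear map. -/
noncomputable def Ai : Hm →L[ℂ] Hhalf :=
  (S.A₀.symm.toContinuousLinearEquiv : Hm ≃L[ℂ] Hhalf)

/-- `A₀⁻¹ D` as a bounded operator on `H_{1/2}`. -/
noncomputable def T : Hhalf →L[ℂ] Hhalf := S.Ai.comp S.D

/-- `A₀⁻¹ : H → H_{1/2}`. -/
noncomputable def Ainv : H →L[ℂ] Hhalf := S.Ai.comp S.j

/-- `A₀⁻¹` considered as a bounded operator on `H_{1/2}`. -/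
noncomputable def AinvR : Hhalf →L[ℂ] Hhalf := S.Ainv.comp S.ι

/-- `A₀⁻¹` considered as a bounded operator on `H`. -/
noncomputable def AinvH : H →L[ℂ] H := S.ι.comp S.Ainv

/-- `λ` is an eigenvalue of the operator matrix `𝒜 = [[0, I], [-A₀, -D]]` with domain
`𝒟(𝒜) = {(z,w) ∈ H_{1/2} × H_{1/2} : A₀ z + D w ∈ H}`: there is a nonzero
`(z, ι w) ∈ 𝒟(𝒜)` (the domain condition being `j y = A₀ z + D w`, so that
`𝒜 (z, ι w) = (w, -y)`) with `𝒜 (z, ι w) = λ • (z, ι w)`. -/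
def IsEigenvalue (lam : ℂ) : Prop :=
  ∃ (z w : Hhalf) (y : H), S.j y = S.A₀ z + S.D w ∧
    ((z, S.ι w) : Hhalf × H) ≠ 0 ∧ w = lam • z ∧ -y = lam • S.ι w

/-- `λ` belongs to the resolvent set of `𝒜`: there is a bounded operator `R` on
`H_{1/2} × H` mapping onto `𝒟(𝒜)` which inverts `𝒜 - λ` from both sides. -/
def InResolvent (lam : ℂ) : Prop :=
  ∃ R : (Hhalf × H) →L[ℂ] (Hhalf × H),
    (∀ q : Hhalf × H, ∃ (z w : Hhalf) (y : H),
        R q = (z, S.ι w) ∧ S.j y = S.A₀ z + S.D w ∧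
        ((w, -y) : Hhalf × H) - lam • ((z, S.ι w) : Hhalf × H) = q) ∧
    (∀ (z w : Hhalf) (y : H), S.j y = S.A₀ z + S.D w →
        R (((w, -y) : Hhalf × H) - lam • ((z, S.ι w) : Hhalf × H)) = (z, S.ι w))


end BeamSetup

/-- The Hilbert space `H_{1/2} × H` (product with the ℓ²-norm). -/
abbrev BeamSetup.State (Hhalf H : Type*) [NormedAddCommGroup Hhalf] [NormedAddCommGroup H] :=
  WithLp 2 (Hhalf × H)

namespace BeamSetup

variable {Hhalf H Hm : Type*}
    [NormedAddCommGroup Hhalf] [InnerProductSpace ℂ Hhalf] [CompleteSpace Hhalf]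
    [NormedAddCommGroup H] [InnerProductSpace ℂ H] [CompleteSpace H]
    [NormedAddCommGroup Hm] [InnerProductSpace ℂ Hm] [CompleteSpace Hm]
    (S : BeamSetup Hhalf H Hm)

/-- Identification of `H_{1/2} × H` with the underlying product. -/
noncomputable def eqv : State Hhalf H ≃ₗ[ℂ] Hhalf × H := WithLp.linearEquiv 2 ℂ (Hhalf × H)

/-- The domain `𝒟(𝒜) = {(z,w) ∈ H_{1/2} × H_{1/2} : A₀ z + D w ∈ H}` of `𝒜`,
as a submodule of the state space `H_{1/2} × H`. -/
def domA : Submodule ℂ (State Hhalf H) where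
  carrier := {p | ∃ (w : Hhalf) (y : H), S.ι w = (eqv p).2 ∧ S.j y = S.A₀ (eqv p).1 + S.D w}
  zero_mem' := ⟨0, 0, by simp, by simp⟩
  add_mem' := by
    rintro p q ⟨w₁, y₁, hw₁, hy₁⟩ ⟨w₂, y₂, hw₂, hy₂⟩
    exact ⟨w₁ + w₂, y₁ + y₂, by simp [hw₁, hw₂], by simp [hy₁, hy₂]; abel⟩
  smul_mem' := by
    rintro c p ⟨w, y, hw, hy⟩
    exact ⟨c • w, c • y, by simp [hw], by simp [hy]⟩

/-- For `p = (z, ι w) ∈ 𝒟(𝒜)`, the element `w ∈ H_{1/2}`. -/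
noncomputable def witw (p : S.domA) : Hhalf := p.2.choose

/-- For `p = (z, ι w) ∈ 𝒟(𝒜)`, the element `y ∈ H` with `j y = A₀ z + D w`. -/
noncomputable def wity (p : S.domA) : H := p.2.choose_spec.choose

lemma witw_spec (p : S.domA) : S.ι (S.witw p) = (eqv (p : State Hhalf H)).2 :=
  p.2.choose_spec.choose_spec.1

lemma wity_spec (p : S.domA) :
    S.j (S.wity p) = S.A₀ (eqv (p : State Hhalf H)).1 + S.D (S.witw p) :=
  p.2.choose_spec.choose_spec.2

lemma witw_add (p q : S.domA) : S.witw (p + q) = S.witw p + S.witw q := by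
  apply S.ι_inj
  simp only [map_add, witw_spec, Submodule.coe_add, Prod.snd_add]

lemma wity_add (p q : S.domA) : S.wity (p + q) = S.wity p + S.wity q := by
  apply S.j_inj
  simp only [map_add, wity_spec, witw_add, Submodule.coe_add, Prod.fst_add, map_add]
  abel

lemma witw_smul (c : ℂ) (p : S.domA) : S.witw (c • p) = c • S.witw p := by
  apply S.ι_inj
  simp only [map_smul, witw_spec, Submodule.coe_smul, Prod.smul_snd]

lemma wity_smul (c : ℂ) (p : S.domA) : S.wity (c • p) = c • S.wity p := by
  apply S.j_inj
  simp only [map_smul, wity_spec, witw_smul, Submodule.coe_smul, Prod.smul_fst, map_smul,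
    smul_add]

/-- The operator matrix `𝒜 = [[0, I], [-A₀, -D]]` as a partially defined linear operator
on the Hilbert space `H_{1/2} × H`: `𝒜 (z, ι w) = (w, -(A₀ z + D w))`. -/
noncomputable def Aop : State Hhalf H →ₗ.[ℂ] State Hhalf H where
  domain := S.domA
  toFun :=
  { toFun := fun p => eqv.symm (S.witw p, -(S.wity p))
    map_add' := fun p q => by
      simp only [witw_add, wity_add, ← map_add, Prod.mk_add_mk, neg_add]
    map_smul' := fun c p => by
      simp only [witw_smul, wity_smul, RingHom.id_apply, ← map_smul, Prod.smul_mk, smul_neg] }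

/-- The operator `J𝒜`, where `J = [[I, 0], [0, -I]]`:  `J𝒜 (z, ι w) = (w, A₀ z + D w)`. -/
noncomputable def JA : State Hhalf H →ₗ.[ℂ] State Hhalf H where
  domain := S.domA
  toFun :=
  { toFun := fun p => eqv.symm (S.witw p, S.wity p)
    map_add' := fun p q => by
      simp only [witw_add, wity_add, ← map_add, Prod.mk_add_mk]
    map_smul' := fun c p => by
      simp only [witw_smul, wity_smul, RingHom.id_apply, ← map_smul, Prod.smul_mk] }

/-- The domain `J 𝒟(𝒜)` of the operator `J𝒜J`. -/
def domAJ : Submodule ℂ (State Hhalf H) where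
  carrier := {p | ∃ (w : Hhalf) (y : H), S.ι w = -(eqv p).2 ∧ S.j y = S.A₀ (eqv p).1 + S.D w}
  zero_mem' := ⟨0, 0, by simp, by simp⟩
  add_mem' := by
    rintro p q ⟨w₁, y₁, hw₁, hy₁⟩ ⟨w₂, y₂, hw₂, hy₂⟩
    refine ⟨w₁ + w₂, y₁ + y₂, by simp [hw₁, hw₂]; abel, by simp [hy₁, hy₂]; abel⟩
  smul_mem' := by
    rintro c p ⟨w, y, hw, hy⟩
    exact ⟨c • w, c • y, by simp [hw], by simp [hy]⟩

noncomputable def witwJ (p : S.domAJ) : Hhalf := p.2.choose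
noncomputable def wityJ (p : S.domAJ) : H := p.2.choose_spec.choose

lemma witwJ_spec (p : S.domAJ) : S.ι (S.witwJ p) = -(eqv (p : State Hhalf H)).2 :=
  p.2.choose_spec.choose_spec.1

lemma wityJ_spec (p : S.domAJ) :
    S.j (S.wityJ p) = S.A₀ (eqv (p : State Hhalf H)).1 + S.D (S.witwJ p) :=
  p.2.choose_spec.choose_spec.2

lemma witwJ_add (p q : S.domAJ) : S.witwJ (p + q) = S.witwJ p + S.witwJ q := by
  apply S.ι_inj
  simp only [map_add, witwJ_spec, Submodule.coe_add, Prod.snd_add]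
  abel

lemma wityJ_add (p q : S.domAJ) : S.wityJ (p + q) = S.wityJ p + S.wityJ q := by
  apply S.j_inj
  simp only [map_add, wityJ_spec, witwJ_add, Submodule.coe_add, Prod.fst_add, map_add]
  abel

lemma witwJ_smul (c : ℂ) (p : S.domAJ) : S.witwJ (c • p) = c • S.witwJ p := by
  apply S.ι_inj
  simp only [map_smul, witwJ_spec, Submodule.coe_smul, Prod.smul_snd, smul_neg]

lemma wityJ_smul (c : ℂ) (p : S.domAJ) : S.wityJ (c • p) = c • S.wityJ p := by
  apply S.j_inj
  simp only [map_smul, wityJ_spec, witwJ_smul, Submodule.coe_smul, Prod.smul_fst, map_smul,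
    smul_add]

/-- The operator `J𝒜J`, with domain `J 𝒟(𝒜)`:  `J𝒜J (z, -ι w) = (w, A₀ z + D w)`. -/
noncomputable def JAJ : State Hhalf H →ₗ.[ℂ] State Hhalf H where
  domain := S.domAJ
  toFun :=
  { toFun := fun p => eqv.symm (S.witwJ p, S.wityJ p)
    map_add' := fun p q => by
      simp only [witwJ_add, wityJ_add, ← map_add, Prod.mk_add_mk]
    map_smul' := fun c p => by
      simp only [witwJ_smul, wityJ_smul, RingHom.id_apply, ← map_smul, Prod.smul_mk] }

end BeamSetup

open BeamSetup

namespace BeamSetup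

variable {Hhalf H Hm : Type*}
    [NormedAddCommGroup Hhalf] [InnerProductSpace ℂ Hhalf] [CompleteSpace Hhalf]
    [NormedAddCommGroup H] [InnerProductSpace ℂ H] [CompleteSpace H]
    [NormedAddCommGroup Hm] [InnerProductSpace ℂ Hm] [CompleteSpace Hm]
    (S : BeamSetup Hhalf H Hm)

lemma inner_j_left' (y : H) (z : Hhalf) : ⟪y, S.ι z⟫_ℂ = ⟪S.A₀.symm (S.j y), z⟫_ℂ :=
  (S.compat y z).symm

lemma inner_iota_right' (z : Hhalf) (y : H) : ⟪S.ι z, y⟫_ℂ = ⟪z, S.A₀.symm (S.j y)⟫_ℂ := by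
  rw [← inner_conj_symm, S.inner_j_left', inner_conj_symm]

lemma Asymm_j_wity (p : S.domA) :
    S.A₀.symm (S.j (S.wity p)) = (eqv (p : State Hhalf H)).1 + S.A₀.symm (S.D (S.witw p)) := by
  rw [S.wity_spec, map_add, LinearIsometryEquiv.symm_apply_apply]

lemma symm_calc (p q : S.domA) :
    ⟪S.witw p, (eqv (q : State Hhalf H)).1⟫_ℂ + ⟪S.wity p, (eqv (q : State Hhalf H)).2⟫_ℂ
    = ⟪(eqv (p : State Hhalf H)).1, S.witw q⟫_ℂ
      + ⟪(eqv (p : State Hhalf H)).2, S.wity q⟫_ℂ := by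
  rw [← S.witw_spec q, ← S.witw_spec p, S.inner_j_left', S.inner_iota_right', S.Asymm_j_wity,
    S.Asymm_j_wity, inner_add_left, inner_add_right, S.D_symm]
  ring

lemma elt_mem (w : Hhalf) (y : H) :
    (eqv.symm (S.A₀.symm (S.j y) - S.A₀.symm (S.D w), S.ι w) : State Hhalf H) ∈ S.domA := by
  refine ⟨w, y, ?_, ?_⟩
  · rw [LinearEquiv.apply_symm_apply]
  · rw [LinearEquiv.apply_symm_apply]
    simp [map_sub, sub_add_cancel]

/-- An element of the domain of the operator matrix. -/
noncomputable def elt (w : Hhalf) (y : H) : S.domA := ⟨_, S.elt_mem w y⟩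

lemma witw_elt (w : Hhalf) (y : H) : S.witw (S.elt w y) = w := by
  apply S.ι_inj
  rw [S.witw_spec]
  show (eqv ((eqv.symm _ : State Hhalf H))).2 = _
  rw [LinearEquiv.apply_symm_apply]

lemma wity_elt (w : Hhalf) (y : H) : S.wity (S.elt w y) = y := by
  apply S.j_inj
  rw [S.wity_spec, S.witw_elt]
  show S.A₀ (eqv ((eqv.symm _ : State Hhalf H))).1 + _ = S.j y
  rw [LinearEquiv.apply_symm_apply]
  simp [map_sub, sub_add_cancel]

lemma inner_state (a : Hhalf) (b : H) (x : State Hhalf H) :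
    ⟪(eqv.symm (a, b) : State Hhalf H), x⟫_ℂ = ⟪a, (eqv x).1⟫_ℂ + ⟪b, (eqv x).2⟫_ℂ := rfl

lemma inner_state' (x : State Hhalf H) (a : Hhalf) (b : H) :
    ⟪x, (eqv.symm (a, b) : State Hhalf H)⟫_ℂ = ⟪(eqv x).1, a⟫_ℂ + ⟪(eqv x).2, b⟫_ℂ := rfl

lemma JA_apply (p : S.domA) : S.JA p = eqv.symm (S.witw p, S.wity p) := rfl

lemma domA_dense : Dense (S.domA : Set (State Hhalf H)) := by
  rw [Submodule.dense_iff_topologicalClosure_eq_top, Submodule.topologicalClosure_eq_top_iff,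
    Submodule.eq_bot_iff]
  intro x hx
  have hx' : ∀ u ∈ S.domA, ⟪u, x⟫_ℂ = 0 := fun u hu => (Submodule.mem_orthogonal _ _).1 hx u hu
  have h1 : (eqv x).1 = 0 := by
    apply S.ι_inj
    rw [map_zero]
    refine ext_inner_left ℂ fun y => ?_
    rw [inner_zero_right, ← S.compat]
    have := hx' _ (S.elt_mem 0 y)
    rw [inner_state] at this
    simpa using this
  have h2 : (eqv x).2 = 0 := by
    have hd : Dense ((LinearMap.range (S.ι : Hhalf →ₗ[ℂ] H) : Submodule ℂ H) : Set H) := by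
      simpa [LinearMap.coe_range, DenseRange] using S.ι_dense
    refine hd.eq_zero_of_inner_right ℂ ?_
    rintro _ ⟨w, rfl⟩
    have := hx' _ (S.elt_mem w 0)
    rw [inner_state] at this
    simpa [h1] using this
  apply eqv.injective
  rw [map_zero]
  exact Prod.ext h1 h2

lemma JA_isFormalAdjoint : S.JA.IsFormalAdjoint S.JA := by
  intro p q
  erw [S.JA_apply, S.JA_apply, inner_state, inner_state']
  exact S.symm_calc p q

lemma adjoint_aux (p : S.JA.adjoint.domain) :
    (eqv (p : State Hhalf H)).2 = S.ι (eqv (S.JA.adjoint p)).1 ∧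
    S.j (eqv (S.JA.adjoint p)).2
      = S.A₀ (eqv (p : State Hhalf H)).1 + S.D (eqv (S.JA.adjoint p)).1 := by
  have hd : Dense (S.JA.domain : Set (State Hhalf H)) := S.domA_dense
  set v : State Hhalf H := S.JA.adjoint p with hv
  have h2 : ∀ q : S.domA, ⟪S.JA q, (p : State Hhalf H)⟫_ℂ = ⟪(q : State Hhalf H), v⟫_ℂ := by
    intro q
    rw [← inner_conj_symm, ← (LinearPMap.adjoint_isFormalAdjoint hd) p q, inner_conj_symm]
  have key : ∀ (w : Hhalf) (y : H),
      ⟪w, (eqv (p : State Hhalf H)).1⟫_ℂ + ⟪y, (eqv (p : State Hhalf H)).2⟫_ℂ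
      = ⟪S.A₀.symm (S.j y) - S.A₀.symm (S.D w), (eqv v).1⟫_ℂ + ⟪S.ι w, (eqv v).2⟫_ℂ := by
    intro w y
    have h3 := h2 (S.elt w y)
    rw [S.JA_apply, S.witw_elt, S.wity_elt, inner_state] at h3
    rw [h3]
    exact inner_state _ _ v
  have hw : (eqv (p : State Hhalf H)).2 = S.ι (eqv v).1 := by
    refine ext_inner_left ℂ fun y => ?_
    have h4 := key 0 y
    simp only [map_zero, sub_zero, inner_zero_left, zero_add, add_zero] at h4
    rw [h4, ← S.compat]
  have hz : (eqv (p : State Hhalf H)).1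
      = S.A₀.symm (S.j (eqv v).2) - S.A₀.symm (S.D (eqv v).1) := by
    refine ext_inner_left ℂ fun w => ?_
    have h5 := key w 0
    simp only [map_zero, zero_sub, inner_zero_left, add_zero, inner_neg_left] at h5
    rw [h5, inner_sub_right, S.inner_iota_right']
    have hD : ⟪S.A₀.symm (S.D w), (eqv v).1⟫_ℂ = ⟪w, S.A₀.symm (S.D (eqv v).1)⟫_ℂ := S.D_symm w _
    rw [hD]
    ring
  refine ⟨hw, ?_⟩
  rw [hz, map_sub, LinearIsometryEquiv.apply_symm_apply, LinearIsometryEquiv.apply_symm_apply]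
  abel

lemma adjoint_le : S.JA.adjoint ≤ S.JA := by
  constructor
  · intro u hu
    obtain ⟨hw, hz⟩ := S.adjoint_aux ⟨u, hu⟩
    exact ⟨_, _, hw.symm, hz⟩
  · intro x y hxy
    obtain ⟨hw, hz⟩ := S.adjoint_aux x
    set v : State Hhalf H := S.JA.adjoint x with hv
    have hwy : S.witw y = (eqv v).1 := by
      apply S.ι_inj
      erw [S.witw_spec, ← hxy, hw]
    have hyy : S.wity y = (eqv v).2 := by
      apply S.j_inj
      erw [S.wity_spec, hwy, ← hxy, hz]
    erw [S.JA_apply, hwy, hyy]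
    exact (LinearEquiv.symm_apply_apply eqv v)

end BeamSetup

/-- The operator `𝒜` is self-adjoint in the Krein space
`(H_{1/2} × H, [·,·])`, where `[(x₁,y₁),(x₂,y₂)] = ⟪x₁,x₂⟫_{H_{1/2}} − ⟪y₁,y₂⟫_H`:
equivalently, `⟨J𝒜 p, q⟩ = ⟨J p, 𝒜 q⟩` for all `p, q ∈ 𝒟(𝒜)` (written out in components,
with `J𝒜 p = (witw p, wity p)`, `J p = (p₁, -p₂)` and `𝒜 q = (witw q, -(wity q))`),
and `J𝒜` is self-adjoint. -/
theorem statement3 {Hhalf H Hm : Type*}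
    [NormedAddCommGroup Hhalf] [InnerProductSpace ℂ Hhalf] [CompleteSpace Hhalf]
    [NormedAddCommGroup H] [InnerProductSpace ℂ H] [CompleteSpace H]
    [NormedAddCommGroup Hm] [InnerProductSpace ℂ Hm] [CompleteSpace Hm]
    (S : BeamSetup Hhalf H Hm) :
    (∀ p q : S.domA,
      ⟪S.witw p, (eqv (q : State Hhalf H)).1⟫_ℂ
        + ⟪S.wity p, (eqv (q : State Hhalf H)).2⟫_ℂ
      = ⟪(eqv (p : State Hhalf H)).1, S.witw q⟫_ℂ
        + ⟪-(eqv (p : State Hhalf H)).2, -(S.wity q)⟫_ℂ) ∧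
    _root_.IsSelfAdjoint S.JA := by
  refine ⟨fun p q => ?_, ?_⟩
  · rw [inner_neg_neg]
    exact S.symm_calc p q
  · have hd : Dense (S.JA.domain : Set (State Hhalf H)) := S.domA_dense
    exact LinearPMap.isSelfAdjoint_def.mpr
      (le_antisymm S.adjoint_le (S.JA_isFormalAdjoint.le_adjoint hd))
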